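/- Let c ≥ 2 be an integer. If the vertex set of a finite simple graph G can be partitioned into c independent sets A_1,…,A_c such that for all i ≠ j the induced subgraph G[A_i ∪ A_j] is a linear forest, then G admits an equitable (c−1)-partition (V_1,…,V_{c−1}) of its vertex set such that each induced subgraph G[V_i] is a linear forest. (By a theorem of Cai, Xie, and Yang, every planar graph G admits such a coloring with c = Δ(G)+7 colors, so every planar graph admits an equitable (Δ(G)+6)-partition into linear forests.) -/
import Mathlib

open SimpleGraph

/-- The set `S` induces a linear forest in `G`: `G[S]` is acyclic and every vertex of `S`
has at most two neighbors inside `S`. -/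
def IsLinearForestOn {V : Type*} (G : SimpleGraph V) (S : Set V) : Prop :=
  (G.induce S).IsAcyclic ∧ ∀ v ∈ S, (G.neighborSet v ∩ S).ncard ≤ 2

lemma IsLinearForestOn.mono {V : Type*} [Fintype V] {G : SimpleGraph V} {S T : Set V}
    (h : IsLinearForestOn G S) (hTS : T ⊆ S) : IsLinearForestOn G T := by
  constructor
  · intro v p hp
    exact h.1 _ (hp.map (f := (induceHomOfLE G hTS).toHom) (induceHomOfLE G hTS).injective)
  · intro v hv
    refine le_trans (Set.ncard_le_ncard ?_ (Set.toFinite _)) (h.2 v (hTS hv))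
    exact Set.inter_subset_inter_right _ hTS

/-- Equitable repartition lemma: `k+2` pairwise disjoint classes can be repartitioned into
`k+1` nearly-equal parts, each contained in the union of two classes. -/
lemma equitable_repartition {V : Type*} [DecidableEq V] {N : ℕ} :
    ∀ (k : ℕ) (A : Fin N → Finset V) (s : Finset (Fin N)),
    s.card = k + 2 →
    (∀ i ∈ s, ∀ j ∈ s, i ≠ j → Disjoint (A i) (A j)) →
    ∃ P : Fin (k + 1) → Finset V,
      (∀ i j, i ≠ j → Disjoint (P i) (P j)) ∧
      Finset.univ.biUnion P = s.biUnion A ∧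
      (∀ i, (P i).card = (s.biUnion A).card / (k + 1) ∨
            (P i).card = (s.biUnion A).card / (k + 1) + 1) ∧
      (∀ i, ∃ a ∈ s, ∃ b ∈ s, a ≠ b ∧ P i ⊆ A a ∪ A b) := by
  intro k
  induction k with
  | zero =>
    intro A s hs hdisj
    obtain ⟨a, b, hab, rfl⟩ := Finset.card_eq_two.1 hs
    have hU : ({a, b} : Finset (Fin N)).biUnion A = A a ∪ A b := by
      ext x; simp [Finset.mem_biUnion]
    refine ⟨fun _ => A a ∪ A b, ?_, ?_, ?_, ?_⟩
    · intro i j hij; exact absurd (Fin.ext (by omega)) hij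
    · ext x; simp [Finset.mem_biUnion, hU]
    · intro i; left; simp [hU]
    · intro i
      exact ⟨a, by simp, b, by simp [hab], hab, by exact subset_rfl⟩
  | succ k ih =>
    intro A s hs hdisj
    have hsne : s.Nonempty := by rw [← Finset.card_pos, hs]; omega
    obtain ⟨m, hm, hmin⟩ := Finset.exists_min_image s (fun i => (A i).card) hsne
    have hsm : (s.erase m).card = k + 2 := by
      rw [Finset.card_erase_of_mem hm, hs]
      omega
    have hsmne : (s.erase m).Nonempty := by rw [← Finset.card_pos, hsm]; omega
    obtain ⟨M, hM, hmax⟩ := Finset.exists_max_image (s.erase m) (fun i => (A i).card) hsmne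
    have hMs : M ∈ s := Finset.mem_of_mem_erase hM
    have hmM : m ≠ M := fun h => (Finset.ne_of_mem_erase hM) h.symm
    set n := (s.biUnion A).card with hn
    have hsum : n = ∑ i ∈ s, (A i).card :=
      Finset.card_biUnion (fun x hx y hy hxy => hdisj x hx y hy hxy)
    set q := n / (k + 2) with hq
    set r := n % (k + 2) with hr
    have hnqr : n = (k + 2) * q + r := by
      rw [hq, hr]; exact (Nat.div_add_mod n (k + 2)).symm
    have hrlt : r < k + 2 := Nat.mod_lt _ (by omega)
    set t := if r = 0 then q else q + 1 with ht
    -- arithmetic facts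
    have h1 : (k + 3) * (A m).card ≤ n := by
      have h := Finset.card_nsmul_le_sum s (fun i => (A i).card) ((A m).card) hmin
      rw [hs, smul_eq_mul] at h
      rw [hsum]
      calc (k + 3) * (A m).card = (k + 1 + 2) * (A m).card := by ring
        _ ≤ _ := h
    have h2 : n ≤ (A m).card + (k + 2) * (A M).card := by
      have h := Finset.sum_le_card_nsmul (s.erase m) (fun i => (A i).card) ((A M).card) hmax
      rw [hsm, smul_eq_mul] at h
      rw [hsum, ← Finset.sum_erase_add s _ hm]
      omega
    have hmq : (A m).card ≤ q := by
      refine (Nat.le_div_iff_mul_le (by omega)).2 ?_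
      calc (A m).card * (k + 2) ≤ (A m).card * (k + 3) :=
            Nat.mul_le_mul_left _ (by omega)
        _ = (k + 3) * (A m).card := by ring
        _ ≤ n := h1
    have hmt : (A m).card ≤ t := by rw [ht]; split <;> omega
    have htm : t ≤ (A m).card + (A M).card := by
      have e1 : (k + 2) * ((A m).card + (A M).card)
          = (k + 2) * (A m).card + (k + 2) * (A M).card := by ring
      have e2 : (k + 2) * (q + 1) = (k + 2) * q + (k + 2) := by ring
      have e3 : (A m).card ≤ (k + 2) * (A m).card := Nat.le_mul_of_pos_left _ (by omega)
      have hqle : q ≤ (A m).card + (A M).card := by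
        refine Nat.le_of_mul_le_mul_left ?_ (show 0 < k + 2 by omega)
        omega
      have hq1le : r ≠ 0 → q + 1 ≤ (A m).card + (A M).card := by
        intro hr0
        by_cases hm0 : (A m).card = 0
        · have hlt : (k + 2) * q < (k + 2) * (A M).card := by omega
          have := Nat.lt_of_mul_lt_mul_left hlt
          omega
        · have e4 : (k + 2) * (A m).card = (A m).card + (k + 1) * (A m).card := by ring
          have e5 : k + 1 ≤ (k + 1) * (A m).card := Nat.le_mul_of_pos_right _ (by omega)
          refine Nat.le_of_mul_le_mul_left ?_ (show 0 < k + 2 by omega)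
          omega
      rw [ht]; split
      · exact hqle
      · next h => exact hq1le h
    have hBle : t - (A m).card ≤ (A M).card := by omega
    obtain ⟨B, hB, hBcard⟩ := Finset.exists_subset_card_eq hBle
    set T := A m ∪ B with hT
    have hdmM : Disjoint (A m) (A M) := hdisj m hm M hMs hmM
    have hdmB : Disjoint (A m) B := hdmM.mono_right hB
    have hTcard : T.card = t := by
      rw [hT, Finset.card_union_of_disjoint hdmB, hBcard]; omega
    have hTsub : T ⊆ s.biUnion A :=
      Finset.union_subset (Finset.subset_biUnion_of_mem A hm)
        (hB.trans (Finset.subset_biUnion_of_mem A hMs))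
    -- new classes
    set A' := fun i => if i = M then A M \ B else A i with hA'
    have hA'M : A' M = A M \ B := by rw [hA']; simp
    have hA'ne : ∀ i, i ≠ M → A' i = A i := by
      intro i h; rw [hA']; simp [h]
    have hA'sub : ∀ i, A' i ⊆ A i := by
      intro i
      by_cases h : i = M
      · subst h; rw [hA'M]; exact Finset.sdiff_subset
      · rw [hA'ne i h]
    have hdisj' : ∀ i ∈ s.erase m, ∀ j ∈ s.erase m, i ≠ j → Disjoint (A' i) (A' j) :=
      fun i hi j hj hij =>
        (hdisj i (Finset.mem_of_mem_erase hi) j (Finset.mem_of_mem_erase hj) hij).mono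
          (hA'sub i) (hA'sub j)
    have hunion : (s.erase m).biUnion A' = (s.biUnion A) \ T := by
      ext x
      simp only [Finset.mem_biUnion, Finset.mem_erase, Finset.mem_sdiff, hT,
        Finset.mem_union, not_or]
      constructor
      · rintro ⟨i, ⟨him, his⟩, hx⟩
        have hxi : x ∈ A' i := hx
        have hxAi : x ∈ A i := hA'sub i hxi
        refine ⟨⟨i, his, hxAi⟩, ?_, ?_⟩
        · exact fun hxm => (Finset.disjoint_left.1 (hdisj i his m hm him)) hxAi hxm
        · by_cases hiM : i = M
          · subst hiM
            rw [hA'M, Finset.mem_sdiff] at hxi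
            exact hxi.2
          · intro hxB
            exact (Finset.disjoint_left.1 (hdisj i his M hMs hiM)) hxAi (hB hxB)
      · rintro ⟨⟨i, his, hx⟩, hxm, hxB⟩
        have him : i ≠ m := fun h => hxm (h ▸ hx)
        refine ⟨i, ⟨him, his⟩, ?_⟩
        by_cases hiM : i = M
        · subst hiM; rw [hA'M]; exact Finset.mem_sdiff.2 ⟨hx, hxB⟩
        · rw [hA'ne i hiM]; exact hx
    have hn' : ((s.erase m).biUnion A').card + t = n := by
      rw [hunion, ← hTcard, hn]
      exact Finset.card_sdiff_add_card_eq_card hTsub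
    set n' := ((s.erase m).biUnion A').card with hn'def
    have htn : t ≤ n := by omega
    -- n' / (k+1) = q
    have hq' : n' / (k + 1) = q := by
      have e2 : (k + 2) * q = (k + 1) * q + q := by ring
      have hr' : n' = (k + 1) * q + (if r = 0 then 0 else r - 1) := by
        rw [ht] at hn'
        by_cases hr0 : r = 0
        · rw [if_pos hr0] at hn' ⊢; omega
        · rw [if_neg hr0] at hn' ⊢; omega
      rw [hr', Nat.mul_add_div (by omega)]
      have : (if r = 0 then 0 else r - 1) / (k + 1) = 0 :=
        Nat.div_eq_of_lt (by split <;> omega)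
      omega
    obtain ⟨P', hP'd, hP'u, hP's, hP'c⟩ := ih A' (s.erase m) hsm hdisj'
    have hP'sub : ∀ jj, P' jj ⊆ (s.biUnion A) \ T := by
      intro jj
      rw [← hunion, ← hP'u]
      exact Finset.subset_biUnion_of_mem P' (Finset.mem_univ jj)
    have key : ∀ jj : Fin (k + 1), Disjoint T (P' jj) :=
      fun jj => (Finset.disjoint_sdiff).mono_right (hP'sub jj)
    refine ⟨Fin.cons T P', ?_, ?_, ?_, ?_⟩
    · intro i j hij
      rcases Fin.eq_zero_or_eq_succ i with rfl | ⟨ii, rfl⟩ <;>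
        rcases Fin.eq_zero_or_eq_succ j with rfl | ⟨jj, rfl⟩
      · exact absurd rfl hij
      · simpa using key jj
      · simpa using (key ii).symm
      · simp only [Fin.cons_succ]
        exact hP'd ii jj (fun h => hij (by rw [h]))
    · have hsplit : Finset.univ.biUnion (Fin.cons T P' : Fin (k + 2) → Finset V)
          = T ∪ Finset.univ.biUnion P' := by
        ext x
        simp [Finset.mem_biUnion, Fin.exists_fin_succ]
      rw [hsplit, hP'u, hunion, Finset.union_sdiff_of_subset hTsub]
    · intro i
      have ekk : k + 1 + 1 = k + 2 := rfl
      rcases Fin.eq_zero_or_eq_succ i with rfl | ⟨ii, rfl⟩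
      · simp only [Fin.cons_zero, hTcard, ekk, ← hn, ← hq]
        rw [ht]
        split
        · left; rfl
        · right; rfl
      · simp only [Fin.cons_succ, ekk, ← hn, ← hq]
        rcases hP's ii with h | h <;> rw [← hn'def, hq'] at h
        · left; exact h
        · right; exact h
    · intro i
      rcases Fin.eq_zero_or_eq_succ i with rfl | ⟨ii, rfl⟩
      · exact ⟨m, hm, M, hMs, hmM, by
          simp only [Fin.cons_zero, hT]
          exact Finset.union_subset_union_right hB⟩
      · obtain ⟨a, ha, b, hb, hab, hsub⟩ := hP'c ii
        exact ⟨a, Finset.mem_of_mem_erase ha, b, Finset.mem_of_mem_erase hb, hab, by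
          simp only [Fin.cons_succ]
          exact hsub.trans (Finset.union_subset_union (hA'sub a) (hA'sub b))⟩

theorem equitable_partition_into_linear_forests
    {V : Type*} [Fintype V] [DecidableEq V] (G : SimpleGraph V)
    (c : ℕ) (hc : 2 ≤ c)
    (hcol : ∃ A : Fin c → Set V,
      (∀ i j, i ≠ j → Disjoint (A i) (A j)) ∧
      (⋃ i, A i) = Set.univ ∧
      (∀ i, ∀ u ∈ A i, ∀ v ∈ A i, ¬ G.Adj u v) ∧
      (∀ i j, i ≠ j → IsLinearForestOn G (A i ∪ A j))) :
    ∃ P : Fin (c - 1) → Finset V,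
      (∀ i j, i ≠ j → Disjoint (P i) (P j)) ∧
      Finset.univ.biUnion P = Finset.univ ∧
      (∀ i j, |((P i).card : ℤ) - ((P j).card : ℤ)| ≤ 1) ∧
      (∀ i, IsLinearForestOn G (P i : Set V)) := by
  obtain ⟨A, hdisj, hcover, hindep, hLF⟩ := hcol
  obtain ⟨k, rfl⟩ : ∃ k, c = k + 2 := ⟨c - 2, by omega⟩
  classical
  set Af : Fin (k + 2) → Finset V := fun i => (A i).toFinite.toFinset with hAf
  have hmem : ∀ i x, x ∈ Af i ↔ x ∈ A i := fun i x => Set.Finite.mem_toFinset _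
  have hdisjf : ∀ i ∈ (Finset.univ : Finset (Fin (k + 2))), ∀ j ∈ Finset.univ,
      i ≠ j → Disjoint (Af i) (Af j) := by
    intro i _ j _ hij
    rw [Finset.disjoint_left]
    intro x hx hx'
    exact Set.disjoint_left.1 (hdisj i j hij) ((hmem i x).1 hx) ((hmem j x).1 hx')
  have hcard : (Finset.univ : Finset (Fin (k + 2))).card = k + 2 := by simp
  obtain ⟨P, hPd, hPu, hPs, hPc⟩ := equitable_repartition k Af Finset.univ hcard hdisjf
  have huniv : Finset.univ.biUnion Af = (Finset.univ : Finset V) := by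
    ext x
    simp only [Finset.mem_biUnion, Finset.mem_univ, true_and, iff_true]
    have hx : x ∈ ⋃ i, A i := hcover ▸ Set.mem_univ x
    obtain ⟨i, hi⟩ := Set.mem_iUnion.1 hx
    exact ⟨i, (hmem i x).2 hi⟩
  refine ⟨P, hPd, by rw [hPu, huniv], ?_, ?_⟩
  · intro i j
    have h1 := hPs i
    have h2 := hPs j
    set Q := (Finset.univ.biUnion Af).card / (k + 1) with hQ
    rw [abs_le]
    constructor <;> omega
  · intro i
    obtain ⟨a, _, b, _, hab, hsub⟩ := hPc i
    refine (hLF a b hab).mono ?_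
    intro x hx
    have hx' : x ∈ P i := by simpa using hx
    have := hsub hx'
    rcases Finset.mem_union.1 this with h | h
    · exact Or.inl ((hmem a x).1 h)
    · exact Or.inr ((hmem b x).1 h)
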